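/- Let ε > 0, u_B ∈ ℝ. For x ∈ ℝ, y ≥ 0, t > 0 define K(x,y,t,ε) = (1/√(2πtε)) (e^{−(x−y)²/(2tε)} + e^{−(x+y)²/(2tε)}) + (2u_B/ε) (1/√(2πtε)) ∫₀^∞ e^{−(1/ε)((x+y+z)²/(2t) − u_B z)} dz. Then for every y > 0 and t > 0, the kernel satisfies the Robin boundary condition at x = 0: ε ∂_x K(0,y,t,ε) + u_B K(0,y,t,ε) = 0. -/

import Mathlib

open MeasureTheory Set

/-- Partial derivative in the first (space) variable. -/
noncomputable def pdx (f : ℝ → ℝ → ℝ) (x t : ℝ) : ℝ := deriv (fun x' => f x' t) x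

/-- The Green's kernel for the heat equation `p_t = (ε/2) p_xx` on the half line
with Robin boundary condition `ε p_x(0,t) + u_B p(0,t) = 0`. -/
noncomputable def heatRobinKernel (ε uB x y t : ℝ) : ℝ :=
  (1 / Real.sqrt (2 * Real.pi * t * ε)) *
      (Real.exp (-(x - y) ^ 2 / (2 * t * ε)) + Real.exp (-(x + y) ^ 2 / (2 * t * ε)))
    + (2 * uB / ε) * (1 / Real.sqrt (2 * Real.pi * t * ε)) *
        ∫ z in Ioi (0:ℝ), Real.exp (-(1 / ε) * ((x + y + z) ^ 2 / (2 * t) - uB * z))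

private noncomputable def hker (ε uB t w : ℝ) : ℝ :=
  Real.exp (-w ^ 2 / (2 * t * ε) + uB * w / ε)

private lemma integral_Ioi_comp_add (h : ℝ → ℝ) (a : ℝ) :
    ∫ z in Ioi (0:ℝ), h (z + a) = ∫ w in Ioi a, h w := by
  have := (measurePreserving_add_right volume a).setIntegral_preimage_emb
    (MeasurableEquiv.addRight a).measurableEmbedding h (Ioi a)
  simpa [preimage_add_const_Ioi] using this

private lemma hker_continuous (ε uB t : ℝ) : Continuous (hker ε uB t) := by
  unfold hker
  apply Real.continuous_exp.comp
  continuity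

private lemma hker_integrable (ε uB t : ℝ) (hε : 0 < ε) (ht : 0 < t) :
    Integrable (hker ε uB t) := by
  have hb : (0:ℝ) < 1 / (2 * t * ε) := by positivity
  have hgauss : Integrable (fun w : ℝ => Real.exp (-(1 / (2 * t * ε)) * (w - t * uB) ^ 2)) := by
    have := ((measurePreserving_sub_right volume (t * uB)).integrable_comp_emb
      (MeasurableEquiv.subRight (t * uB)).measurableEmbedding
      (g := fun w : ℝ => Real.exp (-(1 / (2 * t * ε)) * w ^ 2))).mpr
      (integrable_exp_neg_mul_sq hb)
    simpa [Function.comp_def] using this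
  have heq : hker ε uB t = fun w => Real.exp (t * uB ^ 2 / (2 * ε)) *
      Real.exp (-(1 / (2 * t * ε)) * (w - t * uB) ^ 2) := by
    funext w
    unfold hker
    rw [← Real.exp_add]
    congr 1
    field_simp
    ring
  rw [heq]
  exact hgauss.const_mul _

/-- The kernel satisfies the Robin boundary condition
`ε ∂_x K(0,y,t,ε) + u_B K(0,y,t,ε) = 0` for every `y > 0`, `t > 0`. -/
theorem heatRobinKernel_boundary_condition
    (ε uB : ℝ) (hε : 0 < ε) :
    ∀ y > (0:ℝ), ∀ t > (0:ℝ),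
      ε * pdx (fun x' t' => heatRobinKernel ε uB x' y t') 0 t
        + uB * heatRobinKernel ε uB 0 y t = 0 := by
  intro y hy t ht
  have hεne : ε ≠ 0 := ne_of_gt hε
  have htne : t ≠ 0 := ne_of_gt ht
  set c : ℝ := 1 / Real.sqrt (2 * Real.pi * t * ε) with hc
  set h : ℝ → ℝ := hker ε uB t with hh
  have hint : Integrable h := hker_integrable ε uB t hε ht
  have hcont : Continuous h := hker_continuous ε uB t
  -- Step A: rewrite the z-integral
  have stepA : ∀ x : ℝ,
      (∫ z in Ioi (0:ℝ), Real.exp (-(1 / ε) * ((x + y + z) ^ 2 / (2 * t) - uB * z)))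
        = Real.exp (-(uB * (x + y)) / ε) * ∫ w in Ioi (x + y), h w := by
    intro x
    rw [← integral_Ioi_comp_add h (x + y), ← integral_const_mul]
    congr 1
    funext z
    show _ = Real.exp (-(uB * (x + y)) / ε) * hker ε uB t (z + (x + y))
    unfold hker
    rw [← Real.exp_add]
    congr 1
    field_simp
    ring
  -- derivative of s ↦ ∫_{Ioi s} h at y
  have hG : HasDerivAt (fun s => ∫ w in Ioi s, h w) (-(h y)) y := by
    have hFTC : HasDerivAt (fun u => ∫ w in (0:ℝ)..u, h w) (h y) y :=
      intervalIntegral.integral_hasDerivAt_right (hcont.intervalIntegrable 0 y)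
        hcont.aestronglyMeasurable.stronglyMeasurableAtFilter hcont.continuousAt
    have heq : (fun s => ∫ w in Ioi s, h w) =ᶠ[nhds y]
        fun s => (∫ w in Ioi (0:ℝ), h w) - ∫ w in (0:ℝ)..s, h w := by
      filter_upwards [eventually_gt_nhds hy] with s hs
      rw [intervalIntegral.integral_of_le hs.le, eq_sub_iff_add_eq, add_comm,
        ← setIntegral_union (Ioc_disjoint_Ioi le_rfl) measurableSet_Ioi
          hint.integrableOn hint.integrableOn, Ioc_union_Ioi_eq_Ioi hs.le]
    simpa using (((hasDerivAt_const y (∫ w in Ioi (0:ℝ), h w)).sub hFTC)).congr_of_eventuallyEq heq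
  -- the rewritten kernel as a function of x
  have hfun : (fun x' => heatRobinKernel ε uB x' y t)
      = fun x => c * (Real.exp (-(x - y) ^ 2 / (2 * t * ε))
            + Real.exp (-(x + y) ^ 2 / (2 * t * ε)))
          + (2 * uB / ε) * c *
            (Real.exp (-(uB * (x + y)) / ε) * ∫ w in Ioi (x + y), h w) := by
    funext x
    rw [heatRobinKernel, stepA x]
  -- build the derivative
  have d1 : HasDerivAt (fun x : ℝ => Real.exp (-(x - y) ^ 2 / (2 * t * ε)))
      (Real.exp (-(0 - y) ^ 2 / (2 * t * ε)) * (-(2 * (0 - y)) / (2 * t * ε))) 0 := by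
    have hu : HasDerivAt (fun x : ℝ => -(x - y) ^ 2 / (2 * t * ε))
        (-(2 * (0 - y)) / (2 * t * ε)) 0 := by
      have : HasDerivAt (fun x : ℝ => (x - y) ^ 2) (2 * (0 - y)) 0 := by
        simpa using (((hasDerivAt_id (0:ℝ)).sub_const y).fun_pow 2)
      simpa [neg_div] using (this.neg.div_const (2 * t * ε))
    simpa using hu.exp
  have d2 : HasDerivAt (fun x : ℝ => Real.exp (-(x + y) ^ 2 / (2 * t * ε)))
      (Real.exp (-(0 + y) ^ 2 / (2 * t * ε)) * (-(2 * (0 + y)) / (2 * t * ε))) 0 := by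
    have hu : HasDerivAt (fun x : ℝ => -(x + y) ^ 2 / (2 * t * ε))
        (-(2 * (0 + y)) / (2 * t * ε)) 0 := by
      have : HasDerivAt (fun x : ℝ => (x + y) ^ 2) (2 * (0 + y)) 0 := by
        simpa using (((hasDerivAt_id (0:ℝ)).add_const y).fun_pow 2)
      simpa [neg_div] using (this.neg.div_const (2 * t * ε))
    simpa using hu.exp
  have d3 : HasDerivAt (fun x : ℝ => Real.exp (-(uB * (x + y)) / ε))
      (Real.exp (-(uB * (0 + y)) / ε) * (-uB / ε)) 0 := by
    have hu : HasDerivAt (fun x : ℝ => -(uB * (x + y)) / ε) (-uB / ε) 0 := by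
      have : HasDerivAt (fun x : ℝ => uB * (x + y)) uB 0 := by
        simpa using (((hasDerivAt_id (0:ℝ)).add_const y).const_mul uB)
      simpa [neg_div] using (this.neg.div_const ε)
    simpa using hu.exp
  have d4 : HasDerivAt (fun x : ℝ => ∫ w in Ioi (x + y), h w) (-(h y)) 0 := by
    have hxy : HasDerivAt (fun x : ℝ => x + y) 1 0 := (hasDerivAt_id (0:ℝ)).add_const y
    have hG' : HasDerivAt (fun s => ∫ w in Ioi s, h w) (-(h y)) ((0:ℝ) + y) := by
      rw [zero_add]; exact hG
    have := HasDerivAt.comp (0:ℝ) hG' hxy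
    simpa [Function.comp_def] using this
  have dK : HasDerivAt (fun x' => heatRobinKernel ε uB x' y t)
      (c * (Real.exp (-(0 - y) ^ 2 / (2 * t * ε)) * (-(2 * (0 - y)) / (2 * t * ε))
            + Real.exp (-(0 + y) ^ 2 / (2 * t * ε)) * (-(2 * (0 + y)) / (2 * t * ε)))
        + (2 * uB / ε) * c *
          (Real.exp (-(uB * (0 + y)) / ε) * (-uB / ε) * (∫ w in Ioi ((0:ℝ) + y), h w)
            + Real.exp (-(uB * (0 + y)) / ε) * (-(h y)))) 0 := by
    rw [hfun]
    exact (((d1.add d2).const_mul c).add ((d3.mul d4).const_mul ((2 * uB / ε) * c)))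
  -- finish
  have hpdx : pdx (fun x' t' => heatRobinKernel ε uB x' y t') 0 t
      = c * (Real.exp (-(0 - y) ^ 2 / (2 * t * ε)) * (-(2 * (0 - y)) / (2 * t * ε))
            + Real.exp (-(0 + y) ^ 2 / (2 * t * ε)) * (-(2 * (0 + y)) / (2 * t * ε)))
        + (2 * uB / ε) * c *
          (Real.exp (-(uB * (0 + y)) / ε) * (-uB / ε) * (∫ w in Ioi ((0:ℝ) + y), h w)
            + Real.exp (-(uB * (0 + y)) / ε) * (-(h y))) := by
    rw [pdx]
    exact dK.deriv
  rw [hpdx, heatRobinKernel, stepA 0, ← hc]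
  have key : Real.exp (-(uB * (0 + y)) / ε) * h y = Real.exp (-(0 + y) ^ 2 / (2 * t * ε)) := by
    show Real.exp (-(uB * (0 + y)) / ε) * hker ε uB t y = _
    unfold hker
    rw [← Real.exp_add]
    congr 1
    field_simp
    ring
  have hEy : Real.exp (-((0:ℝ) - y) ^ 2 / (2 * t * ε))
      = Real.exp (-((0:ℝ) + y) ^ 2 / (2 * t * ε)) := by
    congr 1
    ring
  set E := Real.exp (-((0:ℝ) + y) ^ 2 / (2 * t * ε))
  set a1 := Real.exp (-(uB * ((0:ℝ) + y)) / ε)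
  set G0 := ∫ w in Ioi ((0:ℝ) + y), h w
  rw [hEy]
  field_simp
  linear_combination (-(2 * uB * ε * t / Real.sqrt (2 * Real.pi * t * ε))) * key
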